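/- Let Ω be a nonempty convex subset of a locally convex topological vector space X, and let x̄ ∈ Ω. Then x̄ ∈ qri(Ω) if and only if the normal cone N(x̄; Ω) is a linear subspace of X*. -/

import Mathlib

open Set Pointwise Filter Topology

/-- The cone generated by a set `A`: `{t • a | t ≥ 0, a ∈ A}`. -/
def coneGen {X : Type*} [AddCommGroup X] [Module ℝ X] (A : Set X) : Set X :=
  {y | ∃ t : ℝ, 0 ≤ t ∧ ∃ a ∈ A, y = t • a}

/-- A set is a linear subspace if it is the carrier of a submodule. -/
def IsLinSubspace {X : Type*} [AddCommGroup X] [Module ℝ X] (s : Set X) : Prop :=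
  ∃ L : Submodule ℝ X, (L : Set X) = s

/-- Intrinsic relative interior. -/
def iri {X : Type*} [AddCommGroup X] [Module ℝ X] (Ω : Set X) : Set X :=
  {x ∈ Ω | IsLinSubspace (coneGen ((fun y => y - x) '' Ω))}

/-- Quasi-relative interior. -/
def qri {X : Type*} [AddCommGroup X] [Module ℝ X] [TopologicalSpace X] (Ω : Set X) : Set X :=
  {x ∈ Ω | IsLinSubspace (closure (coneGen ((fun y => y - x) '' Ω)))}

/-- Relative interior in a topological vector space. -/
def ri {X : Type*} [AddCommGroup X] [Module ℝ X] [TopologicalSpace X] (Ω : Set X) : Set X :=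
  {x ∈ Ω | ∃ V ∈ nhds x, V ∩ closure ((affineSpan ℝ Ω : Set X)) ⊆ Ω}

/-- Normal cone (functional-analytic version), a subset of the topological dual. -/
def normalCone {X : Type*} [AddCommGroup X] [Module ℝ X] [TopologicalSpace X]
    (Ω : Set X) (xb : X) : Set (X →L[ℝ] ℝ) :=
  {f | ∀ x ∈ Ω, f (x - xb) ≤ 0}

section aux
variable {X : Type*} [AddCommGroup X] [Module ℝ X]

lemma coneGen_zero_mem {A : Set X} (h : A.Nonempty) : (0:X) ∈ coneGen A := by
  obtain ⟨a, ha⟩ := h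
  exact ⟨0, le_refl 0, a, ha, (zero_smul ℝ a).symm⟩

lemma coneGen_smul_mem {A : Set X} {t : ℝ} (ht : 0 ≤ t) {y : X} (hy : y ∈ coneGen A) :
    t • y ∈ coneGen A := by
  obtain ⟨s, hs, a, ha, rfl⟩ := hy
  exact ⟨t * s, mul_nonneg ht hs, a, ha, (mul_smul t s a).symm⟩

lemma coneGen_convex {A : Set X} (hA : Convex ℝ A) (hne : A.Nonempty) :
    Convex ℝ (coneGen A) := by
  rintro x ⟨t1, ht1, a1, ha1, rfl⟩ y ⟨t2, ht2, a2, ha2, rfl⟩ s r hs hr hsr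
  set T : ℝ := s * t1 + r * t2 with hT
  have hst1 : 0 ≤ s * t1 := mul_nonneg hs ht1
  have hrt2 : 0 ≤ r * t2 := mul_nonneg hr ht2
  have hTnn : 0 ≤ T := add_nonneg hst1 hrt2
  rcases eq_or_lt_of_le hTnn with hT0 | hTpos
  · have h1 : s * t1 = 0 := by nlinarith
    have h2 : r * t2 = 0 := by nlinarith
    have : s • t1 • a1 + r • t2 • a2 = 0 := by
      rw [smul_smul, smul_smul, h1, h2, zero_smul, zero_smul, add_zero]
    rw [this]; exact coneGen_zero_mem hne
  · refine ⟨T, hTnn, (s * t1 / T) • a1 + (r * t2 / T) • a2,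
      hA ha1 ha2 (div_nonneg hst1 hTnn) (div_nonneg hrt2 hTnn) ?_, ?_⟩
    · field_simp; exact hT.symm
    · match_scalars <;> field_simp
end aux

theorem qri_iff_normalCone_subspace' {X : Type*} [AddCommGroup X] [Module ℝ X]
    [TopologicalSpace X] [IsTopologicalAddGroup X] [ContinuousSMul ℝ X]
    [LocallyConvexSpace ℝ X]
    (Ω : Set X) (hne : Ω.Nonempty) (hconv : Convex ℝ Ω) (xb : X) (hxb : xb ∈ Ω) :
    (xb ∈ Ω ∧ ∃ L : Submodule ℝ X, (L : Set X) = closure (coneGen ((fun y => y - xb) '' Ω)))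
      ↔ ∃ M : Submodule ℝ (X →L[ℝ] ℝ),
        (M : Set (X →L[ℝ] ℝ)) = {f | ∀ x ∈ Ω, f (x - xb) ≤ 0} := by
  set D : Set X := (fun y => y - xb) '' Ω with hD
  set S : Set X := coneGen D with hS
  set C : Set X := closure S with hC
  have hDne : D.Nonempty := hne.image _
  have hDconv : Convex ℝ D := by
    have := hconv.translate (-xb)
    simpa [hD, image_image, sub_eq_neg_add] using this
  have hSconv : Convex ℝ S := coneGen_convex hDconv hDne
  have hCconv : Convex ℝ C := hSconv.closure
  have h0S : (0:X) ∈ S := coneGen_zero_mem hDne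
  have h0C : (0:X) ∈ C := subset_closure h0S
  have hCsmul : ∀ t : ℝ, 0 ≤ t → ∀ y ∈ C, t • y ∈ C := by
    intro t ht y hy
    exact map_mem_closure (continuous_const_smul t) hy (fun z hz => coneGen_smul_mem ht hz)
  -- f nonpositive on D implies nonpositive on C
  have hfC : ∀ f : X →L[ℝ] ℝ, (∀ x ∈ Ω, f (x - xb) ≤ 0) → ∀ y ∈ C, f y ≤ 0 := by
    intro f hf y hy
    have hS0 : ∀ z ∈ S, f z ≤ 0 := by
      rintro z ⟨t, ht, a, ⟨x, hx, rfl⟩, rfl⟩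
      rw [map_smul]
      exact smul_nonpos_of_nonneg_of_nonpos ht (hf x hx)
    have : C ⊆ {z | f z ≤ 0} :=
      closure_minimal hS0 (isClosed_le f.continuous continuous_const)
    exact this hy
  constructor
  · rintro ⟨-, L, hL⟩
    -- N = annihilator-like set
    have hCneg : ∀ y ∈ C, -y ∈ C := by
      intro y hy
      rw [← hL] at hy ⊢
      exact L.neg_mem hy
    refine ⟨{ carrier := {f | ∀ x ∈ Ω, f (x - xb) = 0},
              zero_mem' := by intro x hx; simp,
              add_mem' := by intro f g hf hg x hx; simp [hf x hx, hg x hx],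
              smul_mem' := by intro c f hf x hx; simp [hf x hx] }, ?_⟩
    ext f
    simp only [SetLike.mem_coe, Submodule.mem_mk, AddSubmonoid.mem_mk,
      AddSubsemigroup.mem_mk, Set.mem_setOf_eq]
    constructor
    · intro hf x hx; exact le_of_eq (hf x hx)
    · intro hf
      intro x hx
      have h1 : f (x - xb) ≤ 0 := hf x hx
      have hmem : x - xb ∈ C := subset_closure ⟨1, zero_le_one, x - xb, ⟨x, hx, rfl⟩, (one_smul ℝ _).symm⟩
      have h2 : f (-(x - xb)) ≤ 0 := hfC f hf _ (hCneg _ hmem)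
      rw [map_neg] at h2
      linarith
  · rintro ⟨M, hM⟩
    refine ⟨hxb, ?_⟩
    -- C is closed under negation
    have hCneg : ∀ y ∈ C, -y ∈ C := by
      intro y₀ hy₀
      by_contra hneg
      obtain ⟨f, u, hfu, hu⟩ :=
        geometric_hahn_banach_closed_point hCconv isClosed_closure hneg
      have hupos : 0 < u := by simpa using hfu 0 h0C
      -- f ≤ 0 on C
      have hfle : ∀ z ∈ C, f z ≤ 0 := by
        intro z hz
        by_contra h
        push_neg at h
        have ht : (0:ℝ) ≤ (u + 1) / f z := div_nonneg (by linarith) h.le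
        have := hfu _ (hCsmul _ ht z hz)
        rw [map_smul, smul_eq_mul, div_mul_cancel₀ _ (ne_of_gt h)] at this
        linarith
      have hfN : f ∈ {g : X →L[ℝ] ℝ | ∀ x ∈ Ω, g (x - xb) ≤ 0} := by
        intro x hx
        exact hfle _ (subset_closure ⟨1, zero_le_one, x - xb, ⟨x, hx, rfl⟩, (one_smul ℝ _).symm⟩)
      rw [← hM] at hfN
      have hnegf : -f ∈ M := M.neg_mem hfN
      rw [← SetLike.mem_coe, hM] at hnegf
      have hf0 : ∀ x ∈ Ω, f (x - xb) = 0 := by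
        intro x hx
        have h1 := (hM ▸ (hfN : f ∈ M) : f ∈ {g : X →L[ℝ] ℝ | ∀ x ∈ Ω, g (x - xb) ≤ 0}) x hx
        have h2 := hnegf x hx
        simp only [ContinuousLinearMap.neg_apply] at h2
        linarith
      have hfC0 : ∀ z ∈ C, f z = 0 := by
        intro z hz
        have hle := hfC f (fun x hx => le_of_eq (hf0 x hx)) z hz
        have hge : (0:ℝ) ≤ f z := by
          have hS0 : ∀ w ∈ S, 0 ≤ f w := by
            rintro w ⟨t, ht, a, ⟨x, hx, rfl⟩, rfl⟩
            rw [map_smul, smul_eq_mul, hf0 x hx, mul_zero]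
          have : C ⊆ {w | 0 ≤ f w} :=
            closure_minimal hS0 (isClosed_le continuous_const f.continuous)
          exact this hz
        linarith
      have : f (-y₀) = 0 := by rw [map_neg, hfC0 y₀ hy₀, neg_zero]
      linarith
    refine ⟨{ carrier := C,
              zero_mem' := h0C,
              add_mem' := ?_,
              smul_mem' := ?_ }, rfl⟩
    · intro a b ha hb
      have hmid : (1/2 : ℝ) • a + (1/2 : ℝ) • b ∈ C :=
        hCconv ha hb (by norm_num) (by norm_num) (by norm_num)
      have := hCsmul 2 (by norm_num) _ hmid
      rw [smul_add, smul_smul, smul_smul] at this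
      norm_num at this
      exact this
    · intro c y hy
      rcases le_or_gt 0 c with hc | hc
      · exact hCsmul c hc y hy
      · have : c • y = (-c) • (-y) := by rw [neg_smul, smul_neg, neg_neg]
        rw [this]
        exact hCsmul (-c) (by linarith) _ (hCneg y hy)

/-- `xb ∈ qri Ω` iff the normal cone `N(xb; Ω)` is a linear subspace of `X*`. -/
theorem qri_iff_normalCone_subspace {X : Type*} [AddCommGroup X] [Module ℝ X]
    [TopologicalSpace X] [IsTopologicalAddGroup X] [ContinuousSMul ℝ X]
    [LocallyConvexSpace ℝ X]
    (Ω : Set X) (hne : Ω.Nonempty) (hconv : Convex ℝ Ω) (xb : X) (hxb : xb ∈ Ω) :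
    xb ∈ qri Ω ↔ IsLinSubspace (normalCone Ω xb) := by
  simpa [qri, IsLinSubspace, normalCone, Set.mem_setOf_eq] using
    qri_iff_normalCone_subspace' Ω hne hconv xb hxb
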